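/- Let n be an odd integer with n ≠ 1 such that 2^n − 1 is squarefree. Then there exists an irreducible λ-quiddity over the finite field with 2^n elements of size 3·(2^n − 1). In particular the maximal size of irreducible λ-quiddities over this field is at least 3·(2^n − 1). -/

import Mathlib

namespace Quiddity

variable {A : Type*} [CommRing A]

/-- `mMat [a₁, …, aₙ]` is the matrix product `[[aₙ,-1],[1,0]] ⋯ [[a₁,-1],[1,0]]`. -/
def mMat : List A → Matrix (Fin 2) (Fin 2) A
  | [] => 1
  | a :: t => mMat t * !![a, -1; 1, 0]

/-- Continuant: `cont [] = K₀ = 1`, `cont [a] = K₁(a) = a`, and the continuant recursion. -/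
def cont : List A → A
  | [] => 1
  | [a] => a
  | a :: b :: t => a * cont (b :: t) - cont t

/-- A λ-quiddity is a tuple with `Mₙ(a₁,…,aₙ) = ± Id`. -/
def IsQuiddity (l : List A) : Prop := mMat l = 1 ∨ mMat l = -1

/-- The sum `⊕` of two tuples (meaningful for tuples of length ≥ 2):
`(a₁,…,aₘ) ⊕ (b₁,…,b_l) = (a₁+b_l, a₂,…,a_{m−1}, aₘ+b₁, b₂,…,b_{l−1})`. -/
def oplus (la lb : List A) : List A :=
  (la.headD 0 + lb.getLastD 0) ::
    (la.tail.dropLast ++ (la.getLastD 0 + lb.headD 0) :: lb.tail.dropLast)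

/-- Two tuples are equivalent if one is a cyclic permutation of the other or of its
reversal. -/
def TupleEquiv (l l' : List A) : Prop :=
  List.IsRotated l l' ∨ List.IsRotated l.reverse l'

/-- A λ-quiddity `c` is reducible if `c ∼ a ⊕ b` with `b` a λ-quiddity and both of size ≥ 3. -/
def QuiddityReducible (c : List A) : Prop :=
  ∃ a b : List A, 3 ≤ a.length ∧ 3 ≤ b.length ∧ IsQuiddity b ∧ TupleEquiv c (oplus a b)

/-- `(a, b, a, b, …, a, b)` with `k` repetitions of the pair `(a, b)` (size `2k`). -/
def dynList : ℕ → A → A → List A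
  | 0, _, _ => []
  | k + 1, a, b => a :: b :: dynList k a b

/-- `(u, v, v, u, v, v, …, u, v, v)` with `k` repetitions of the block `(u, v, v)`
(size `3k`). -/
def triList : ℕ → A → A → List A
  | 0, _, _ => []
  | k + 1, a, b => a :: b :: b :: triList k a b

end Quiddity

open Quiddity


set_option linter.unusedSectionVars false
set_option maxHeartbeats 1000000

namespace Quiddity

variable {A : Type*} [CommRing A]

theorem mMat_nil : mMat ([] : List A) = 1 := rfl

theorem mMat_cons (a : A) (t : List A) : mMat (a :: t) = mMat t * !![a, -1; 1, 0] := rfl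

theorem mMat_single (a : A) : mMat [a] = !![a, -1; 1, 0] := by
  rw [mMat_cons, mMat_nil, one_mul]

theorem mMat_append (l1 l2 : List A) : mMat (l1 ++ l2) = mMat l2 * mMat l1 := by
  induction l1 with
  | nil => simp [mMat_nil]
  | cons a t ih => simp [mMat_cons, ih, mul_assoc]

theorem triList_length (k : ℕ) (a b : A) : (triList k a b).length = 3 * k := by
  induction k with
  | zero => rfl
  | succ k ih => simp [triList, ih]; ring

theorem triList_concat (k : ℕ) (a b : A) :
    triList k a b ++ [a, b, b] = triList (k + 1) a b := by
  induction k with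
  | zero => rfl
  | succ k ih => simp only [triList, List.cons_append, ih]

theorem triList_reverse (k : ℕ) (a b : A) :
    (triList (k + 1) a b).reverse = b :: b :: (triList k a b ++ [a]) := by
  induction k with
  | zero => rfl
  | succ k ih =>
    show (triList (k+1+1) a b).reverse = _
    rw [triList]
    simp only [List.reverse_cons, ih]
    simp only [List.append_assoc, List.cons_append, List.nil_append]
    have := triList_concat k a b
    simp only [← this]
    simp [triList]

theorem triList_rotate_three (k : ℕ) (a b : A) :
    (triList (k + 1) a b).rotate 3 = triList (k + 1) a b := by
  rw [List.rotate_eq_drop_append_take (by simp [triList_length]; try omega)]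
  show triList k a b ++ [a, b, b] = _
  exact triList_concat k a b

theorem triList_rotate_mod (k : ℕ) (a b : A) (m : ℕ) :
    (triList (k + 1) a b).rotate m = (triList (k + 1) a b).rotate (m % 3) := by
  conv_lhs => rw [← Nat.div_add_mod m 3]
  generalize m / 3 = q
  induction q with
  | zero => simp
  | succ q ih =>
    have : 3 * (q + 1) + m % 3 = 3 + (3 * q + m % 3) := by ring
    rw [this, ← List.rotate_rotate, triList_rotate_three, ih]

theorem mMat_triList (k : ℕ) (a b : A) :
    mMat (triList k a b) = (mMat [a, b, b]) ^ k := by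
  induction k with
  | zero => simp [triList, mMat_nil]
  | succ k ih =>
    show mMat (a :: b :: b :: triList k a b) = _
    simp only [mMat_cons, ih, pow_succ, mMat_nil, one_mul, mul_assoc]

theorem triList_suffix {t : List A} {k : ℕ} {a b : A} (h : t <:+ triList k a b) :
    ∃ j, j ≤ k ∧ (t = triList j a b ∨ t = b :: triList j a b ∨ t = b :: b :: triList j a b) := by
  induction k with
  | zero => exact ⟨0, le_rfl, Or.inl (List.suffix_nil.mp h)⟩
  | succ k ih =>
    rw [show triList (k+1) a b = a :: b :: b :: triList k a b from rfl] at h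
    rcases List.suffix_cons_iff.mp h with h1 | h
    · exact ⟨k + 1, le_rfl, Or.inl h1⟩
    rcases List.suffix_cons_iff.mp h with h1 | h
    · exact ⟨k, by omega, Or.inr (Or.inr h1)⟩
    rcases List.suffix_cons_iff.mp h with h1 | h
    · exact ⟨k, by omega, Or.inr (Or.inl h1)⟩
    · obtain ⟨j, hj, hc⟩ := ih h
      exact ⟨j, by omega, hc⟩

theorem rotate_one_eq (k : ℕ) (a b : A) :
    (triList (k + 1) a b).rotate 1 = (b :: b :: triList k a b) ++ [a] := by
  rw [List.rotate_eq_drop_append_take (by simp [triList_length]; try omega)]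
  rfl

theorem rotate_two_eq (k : ℕ) (a b : A) :
    (triList (k + 1) a b).rotate 2 = (b :: triList k a b) ++ [a, b] := by
  rw [List.rotate_eq_drop_append_take (by simp [triList_length]; try omega)]
  simp [triList]

theorem reverse_eq_rotate_one (k : ℕ) (a b : A) :
    (triList (k + 1) a b).reverse = (triList (k + 1) a b).rotate 1 := by
  rw [triList_reverse, rotate_one_eq]
  simp


section CharTwo

variable {v lam : A}


theorem M0_eq (h2 : (2 : A) = 0) (hv : lam * v = 1) :
    mMat [lam, v, v] = !![lam, 1 + v^2; 0, v] := by
  show ((1 * !![v, -1; 1, 0]) * !![v, -1; 1, 0]) * !![lam, -1; 1, 0] = _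
  rw [one_mul, Matrix.mul_fin_two, Matrix.mul_fin_two]
  ext i j
  fin_cases i <;> fin_cases j <;> simp
  · linear_combination v * hv - lam * h2
  · linear_combination (-(v^2)) * h2
  · linear_combination hv
  · linear_combination (-v) * h2

theorem pow_M0 (h2 : (2 : A) = 0) (hv : lam * v = 1) (j : ℕ) : (!![lam, 1 + v^2; 0, v]) ^ j
    = !![lam^j, lam^j * (v^(2*j+1) + v); 0, v^j] := by
  induction j with
  | zero =>
    rw [pow_zero, Matrix.one_fin_two]
    ext i j
    fin_cases i <;> fin_cases j <;> simp
    · linear_combination (-v) * h2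
  | succ j ih =>
    rw [pow_succ, ih, Matrix.mul_fin_two]
    ext i j
    fin_cases i <;> fin_cases j <;> simp
    · ring
    · linear_combination (-(lam^j*v^(2*j+2) + lam^j)) * hv + (lam^j*v^2) * h2
    · ring

theorem mMat_triList_eq (h2 : (2 : A) = 0) (hv : lam * v = 1) (j : ℕ) :
    mMat (triList j lam v) = !![lam^j, lam^j * (v^(2*j+1) + v); 0, v^j] := by
  rw [mMat_triList, M0_eq h2 hv, pow_M0 h2 hv]

theorem mMat_quiddity (h2 : (2 : A) = 0) (hv : lam * v = 1) (k : ℕ)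
    (hvk : v ^ k = 1) (hlk : lam ^ k = 1) :
    mMat (triList k lam v) = 1 := by
  rw [mMat_triList_eq h2 hv, Matrix.one_fin_two]
  ext i j
  fin_cases i <;> fin_cases j <;> simp
  · linear_combination hlk
  · linear_combination (v^(2*k+1)+v) * hlk + (v^(k+1)+v) * hvk + v * h2
  · linear_combination hvk

theorem G1_eq (h2 : (2 : A) = 0) (hv : lam * v = 1) (j : ℕ) :
    mMat (v :: triList j lam v) = !![v^(j+1), -(lam^j); v^j, 0] := by
  have hAB : lam ^ j * v ^ j = 1 := by rw [← mul_pow, hv, one_pow]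
  rw [mMat_cons, mMat_triList_eq h2 hv, Matrix.mul_fin_two]
  ext i j'
  fin_cases i <;> fin_cases j' <;> simp
  · linear_combination (v^(j+1)) * hAB + (lam^j * v) * h2

theorem G2_eq (h2 : (2 : A) = 0) (hv : lam * v = 1) (j : ℕ) :
    mMat (v :: v :: triList j lam v) = !![v^(j+2) - lam^j, -(v^(j+1)); v^(j+1), -(v^j)] := by
  rw [mMat_cons, G1_eq h2 hv, Matrix.mul_fin_two]
  ext i j'
  fin_cases i <;> fin_cases j' <;> simp <;> ring

theorem G3_eq (hv : lam * v = 1) : mMat [lam, v] = !![0, -v; lam, -1] := by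
  show (1 * !![v, -1; 1, 0]) * !![lam, -1; 1, 0] = _
  rw [one_mul, Matrix.mul_fin_two]
  ext i j'
  fin_cases i <;> fin_cases j' <;> simp
  · linear_combination hv


theorem val1 (h2 : (2 : A) = 0) (hv : lam * v = 1) (j : ℕ) :
    mMat (triList j lam v) 0 0 = lam ^ j := by
  rw [mMat_triList_eq h2 hv]; simp

theorem val2 (h2 : (2 : A) = 0) (hv : lam * v = 1) (j : ℕ) :
    mMat (v :: triList j lam v) 0 0 = v ^ (j+1) := by
  rw [G1_eq h2 hv]; simp

theorem val3 (h2 : (2 : A) = 0) (hv : lam * v = 1) (j : ℕ) :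
    mMat (v :: v :: triList j lam v) 0 0 = v ^ (j+2) - lam ^ j := by
  rw [G2_eq h2 hv]; simp

theorem val4 (h2 : (2 : A) = 0) (hv : lam * v = 1) (j : ℕ) :
    mMat (triList j lam v ++ [lam]) 0 0 = lam ^ (j+1) := by
  rw [mMat_append, mMat_single, mMat_triList_eq h2 hv, Matrix.mul_fin_two]
  simp; ring

theorem val5 (h2 : (2 : A) = 0) (hv : lam * v = 1) (j : ℕ) :
    mMat ((v :: triList j lam v) ++ [lam]) 0 0 = 0 := by
  rw [mMat_append, mMat_single, G1_eq h2 hv, Matrix.mul_fin_two]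
  simp
  linear_combination (v^j) * hv

theorem val6 (h2 : (2 : A) = 0) (hv : lam * v = 1) (j : ℕ) :
    mMat ((v :: v :: triList j lam v) ++ [lam]) 0 0 = lam ^ (j+1) := by
  rw [mMat_append, mMat_single, G2_eq h2 hv, Matrix.mul_fin_two]
  simp
  linear_combination (v^(j+1)) * hv - lam^(j+1) * h2

theorem val7 (h2 : (2 : A) = 0) (hv : lam * v = 1) (j : ℕ) :
    mMat (triList j lam v ++ [lam, v]) 0 0 = 0 := by
  rw [mMat_append, G3_eq hv, mMat_triList_eq h2 hv, Matrix.mul_fin_two]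
  simp

theorem val8 (h2 : (2 : A) = 0) (hv : lam * v = 1) (j : ℕ) :
    mMat ((v :: triList j lam v) ++ [lam, v]) 0 0 = v ^ (j+1) := by
  rw [mMat_append, G3_eq hv, G1_eq h2 hv, Matrix.mul_fin_two]
  simp
  linear_combination (-(v^(j+1))) * h2

theorem val9 (h2 : (2 : A) = 0) (hv : lam * v = 1) (j : ℕ) :
    mMat ((v :: v :: triList j lam v) ++ [lam, v]) 0 0 = v ^ (j+2) := by
  rw [mMat_append, G3_eq hv, G2_eq h2 hv, Matrix.mul_fin_two]
  simp
  linear_combination (-(v^(j+2))) * h2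

-- interior entry from quiddity
theorem interior_entry (h2 : (2 : A) = 0) (x y : A) (t : List A)
    (hq : IsQuiddity (x :: (t ++ [y]))) : mMat t 0 0 = 1 := by
  have hXX' : !![x, -1; 1, 0] * !![0, 1; -1, x] = 1 := by
    rw [Matrix.mul_fin_two, Matrix.one_fin_two]
    ext i j
    fin_cases i <;> fin_cases j <;> simp <;> ring
  have hY'Y : !![0, 1; -1, y] * !![y, -1; 1, 0] = 1 := by
    rw [Matrix.mul_fin_two, Matrix.one_fin_two]
    ext i j
    fin_cases i <;> fin_cases j <;> simp <;> ring
  have hm : mMat (x :: (t ++ [y])) = !![y, -1; 1, 0] * mMat t * !![x, -1; 1, 0] := by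
    rw [mMat_cons, mMat_append, mMat_single]
  rcases hq with h | h <;> rw [hm] at h
  · have h1 : !![y, -1; 1, 0] * mMat t = !![0, 1; -1, x] := by
      have := congrArg (· * !![0, 1; -1, x]) h
      simpa only [mul_assoc, hXX', mul_one, one_mul] using this
    have h2' : mMat t = !![0, 1; -1, y] * !![0, 1; -1, x] := by
      have := congrArg (!![0, 1; -1, y] * ·) h1
      simpa only [← mul_assoc, hY'Y, one_mul] using this
    rw [h2', Matrix.mul_fin_two]
    simp
    linear_combination -h2
  · have h1 : !![y, -1; 1, 0] * mMat t = -(!![0, 1; -1, x]) := by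
      have := congrArg (· * !![0, 1; -1, x]) h
      simp only [mul_assoc, hXX', mul_one, one_mul, neg_mul] at this
      simpa using this
    have h2' : mMat t = -(!![0, 1; -1, y] * !![0, 1; -1, x]) := by
      have h3 := congrArg (!![0, 1; -1, y] * ·) h1
      simpa only [mul_neg, ← mul_assoc, hY'Y, one_mul] using h3
    rw [h2', Matrix.mul_fin_two]
    simp


theorem suffix_shapes {K : ℕ} {t' : List A} (h : t' <:+ v :: v :: triList K lam v) :
    ∃ j, j ≤ K ∧ (t' = triList j lam v ∨ t' = v :: triList j lam v
      ∨ t' = v :: v :: triList j lam v) := by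
  rcases List.suffix_cons_iff.mp h with rfl | h
  · exact ⟨K, le_rfl, Or.inr (Or.inr rfl)⟩
  rcases List.suffix_cons_iff.mp h with rfl | h
  · exact ⟨K, le_rfl, Or.inr (Or.inl rfl)⟩
  · exact triList_suffix h

theorem hard_case (h2 : (2 : A) = 0) (hv : lam * v = 1)
    (hAS : ∀ z : A, z^2 + z ≠ v^2) (j : ℕ)
    (hcon : mMat (v :: v :: triList j lam v) 0 0 = 1) : False := by
  rw [val3 h2 hv] at hcon
  have hAB : lam ^ j * v ^ j = 1 := by rw [← mul_pow, hv, one_pow]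
  have hd : v^(2*j+2) - v^j = 1 := by linear_combination v^j * hcon + hAB
  exact hAS (v^(j+2)) (by linear_combination v^2 * hd + v^(j+2) * h2)

theorem master (h2 : (2 : A) = 0) (hv : lam * v = 1) (h01 : (0 : A) ≠ 1) (K : ℕ) (hK : 2 ≤ K)
    (hord : ∀ m : ℕ, 0 < m → m < K + 1 → v ^ m ≠ 1)
    (hAS : ∀ z : A, z^2 + z ≠ v^2)
    (t : List A) (ht : t ≠ []) (hlen : t.length + 3 ≤ 3 * (K + 1))
    (hsuf : t <:+ triList (K+1) lam v ∨ t <:+ (triList (K+1) lam v).rotate 1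
      ∨ t <:+ (triList (K+1) lam v).rotate 2) :
    mMat t 0 0 ≠ 1 := by
  have hlord : ∀ m : ℕ, 0 < m → m < K + 1 → lam ^ m ≠ 1 := by
    intro m h1 h2' hl
    refine hord m h1 h2' ?_
    have hvm : v ^ m = (lam * v) ^ m := by rw [mul_pow, hl, one_mul]
    rw [hvm, hv, one_pow]
  intro hcon
  rcases hsuf with h | h | h
  · obtain ⟨j, hj, hshape⟩ := triList_suffix h
    rcases hshape with rfl | rfl | rfl
    · rw [val1 h2 hv] at hcon
      have hj0 : j ≠ 0 := by
        rintro rfl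
        exact ht rfl
      have hlen' := triList_length j lam v
      exact hlord j (by omega) (by omega) hcon
    · rw [val2 h2 hv] at hcon
      have hlen' := triList_length j lam v
      simp only [List.length_cons, hlen'] at hlen
      exact hord (j+1) (by omega) (by omega) hcon
    · exact hard_case h2 hv hAS j hcon
  · rw [rotate_one_eq] at h
    rcases List.suffix_concat_iff.mp h with rfl | ⟨t', rfl, ht'⟩
    · exact ht rfl
    obtain ⟨j, hj, hshape⟩ := suffix_shapes ht'
    have hlen' := triList_length j lam v
    rcases hshape with rfl | rfl | rfl
    · rw [val4 h2 hv] at hcon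
      simp only [List.length_append, List.length_cons, List.length_nil, hlen'] at hlen
      exact hlord (j+1) (by omega) (by omega) hcon
    · rw [val5 h2 hv] at hcon
      exact h01 hcon
    · rw [val6 h2 hv] at hcon
      simp only [List.length_append, List.length_cons, List.length_nil, hlen'] at hlen
      exact hlord (j+1) (by omega) (by omega) hcon
  · rw [rotate_two_eq] at h
    have hre : (v :: triList K lam v) ++ [lam, v] = ((v :: triList K lam v) ++ [lam]) ++ [v] := by
      simp
    rw [hre] at h
    rcases List.suffix_concat_iff.mp h with rfl | ⟨t'', rfl, ht''⟩
    · exact ht rfl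
    rcases List.suffix_concat_iff.mp ht'' with rfl | ⟨t', rfl, ht'⟩
    · rw [List.nil_append, mMat_single] at hcon
      simp at hcon
      exact hord 1 (by omega) (by omega) (by rw [pow_one]; exact hcon)
    have ht'2 : t' <:+ v :: v :: triList K lam v :=
      ht'.trans (List.suffix_cons v (v :: triList K lam v))
    obtain ⟨j, hj, hshape⟩ := suffix_shapes ht'2
    have hlen' := triList_length j lam v
    have hre2 : (t' ++ [lam]) ++ [v] = t' ++ [lam, v] := by simp
    rw [hre2] at hcon hlen
    rcases hshape with rfl | rfl | rfl
    · rw [val7 h2 hv] at hcon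
      exact h01 hcon
    · rw [val8 h2 hv] at hcon
      simp only [List.length_append, List.length_cons, List.length_nil, hlen'] at hlen
      exact hord (j+1) (by omega) (by omega) hcon
    · rw [val9 h2 hv] at hcon
      simp only [List.length_append, List.length_cons, List.length_nil, hlen'] at hlen
      exact hord (j+2) (by omega) (by omega) hcon

end CharTwo

end Quiddity

section SumPrim
open Finset


theorem sum_pow_eq_one_roots (F : Type*) [Field F] [Fintype F] [DecidableEq F] (D : ℕ)
    (hD : D ∣ Fintype.card Fˣ) (hD2 : 2 ≤ D) :
    ∑ x ∈ univ.filter (fun x : Fˣ => x ^ D = 1), (x : F) = 0 := by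
  classical
  obtain ⟨g, hg⟩ := IsCyclic.exists_generator (α := Fˣ)
  have hN0 : Fintype.card Fˣ ≠ 0 := Fintype.card_ne_zero
  have hgord : orderOf g = Fintype.card Fˣ := by
    rw [orderOf_eq_card_of_forall_mem_zpowers hg, Nat.card_eq_fintype_card]
  set N := Fintype.card Fˣ with hN
  set h0 : Fˣ := g ^ (N / D) with hh0
  have hdvd : N / D ∣ N := Nat.div_dvd_of_dvd hD
  have hord : orderOf h0 = D := by
    rw [hh0, orderOf_pow, hgord, Nat.gcd_eq_right hdvd, Nat.div_div_self hD hN0]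
  have hND : D * (N / D) = N := Nat.mul_div_cancel' hD
  have hset : univ.filter (fun x : Fˣ => x ^ D = 1) = (range D).image (h0 ^ ·) := by
    ext x
    simp only [mem_filter, mem_univ, true_and, mem_image, mem_range]
    constructor
    · intro hx
      obtain ⟨i, hi⟩ := mem_powers_iff_mem_zpowers.mpr (hg x)
      have hi' : g ^ i = x := hi
      have hdM : N ∣ i * D := by
        rw [← hgord]
        apply orderOf_dvd_of_pow_eq_one
        rw [pow_mul, hi', hx]
      have hdvd_i : N / D ∣ i := by
        have h' : (N / D) * D ∣ i * D := by
          rwa [← hND, mul_comm D (N / D)] at hdM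
        exact (Nat.mul_dvd_mul_iff_right (show 0 < D by omega)).mp h'
      obtain ⟨c, hc⟩ := hdvd_i
      refine ⟨c % D, Nat.mod_lt _ (by omega), ?_⟩
      show h0 ^ (c % D) = x
      rw [← hord, pow_mod_orderOf, hh0, ← pow_mul, ← hc, hi']
    · rintro ⟨i, _, rfl⟩
      show (h0 ^ i) ^ D = 1
      rw [← pow_mul, mul_comm, pow_mul, ← hord, pow_orderOf_eq_one, one_pow]
  rw [hset, Finset.sum_image ?inj]
  case inj =>
    intro i hi j hj hij
    exact pow_injOn_Iio_orderOf (by simpa [hord] using mem_range.mp hi)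
      (by simpa [hord] using mem_range.mp hj) hij
  have hne1 : (h0 : F) ≠ 1 := by
    intro hcon
    have : h0 = 1 := Units.val_eq_one.mp hcon
    rw [this, orderOf_one] at hord
    omega
  have hsum : ∑ i ∈ range D, ((h0 ^ i : Fˣ) : F) = ∑ i ∈ range D, ((h0 : F)) ^ i := by
    simp [Units.val_pow_eq_pow_val]
  rw [hsum, geom_sum_eq hne1]
  have hpow : ((h0 : F)) ^ D = 1 := by
    rw [← Units.val_pow_eq_pow_val, ← hord, pow_orderOf_eq_one, Units.val_one]
  rw [hpow, sub_self, zero_div]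

theorem sum_primitive (F : Type*) [Field F] [Fintype F] [DecidableEq F] :
    ∑ x ∈ univ.filter (fun x : Fˣ => orderOf x = Fintype.card Fˣ), (x : F)
      = ((ArithmeticFunction.moebius (Fintype.card Fˣ) : ℤ) : F) := by
  classical
  have hN0 : 0 < Fintype.card Fˣ := Fintype.card_pos
  set N := Fintype.card Fˣ with hN
  have key : ∀ D > 0, D ∈ {m : ℕ | m ∣ N} →
      ∑ d ∈ Nat.divisors D, (∑ x ∈ univ.filter (fun x : Fˣ => orderOf x = d), (x : F))
        = (if D = 1 then (1 : F) else 0) := by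
    intro D hD0 hDN
    have hDdvd : D ∣ N := hDN
    have hsplit : ∑ d ∈ D.divisors, (∑ x ∈ univ.filter (fun x : Fˣ => orderOf x = d), (x : F))
        = ∑ x ∈ univ.filter (fun x : Fˣ => x ^ D = 1), (x : F) := by
      rw [← Finset.sum_fiberwise_of_maps_to (g := fun x : Fˣ => orderOf x)
        (t := D.divisors) ?maps (fun x : Fˣ => (x : F))]
      case maps =>
        intro x hx
        simp only [mem_filter, mem_univ, true_and] at hx
        exact Nat.mem_divisors.mpr ⟨orderOf_dvd_of_pow_eq_one hx, by omega⟩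
      apply Finset.sum_congr rfl
      intro d hd
      apply Finset.sum_congr ?_ (fun _ _ => rfl)
      ext x
      constructor
      · intro hx
        have hod := (Finset.mem_filter.mp hx).2
        refine Finset.mem_filter.mpr ⟨Finset.mem_filter.mpr ⟨Finset.mem_univ x, ?_⟩, hod⟩
        exact orderOf_dvd_iff_pow_eq_one.mp (hod ▸ Nat.dvd_of_mem_divisors hd)
      · intro hx
        exact Finset.mem_filter.mpr ⟨Finset.mem_univ x, (Finset.mem_filter.mp hx).2⟩
    rw [hsplit]
    by_cases hD1 : D = 1
    · rw [if_pos hD1, hD1]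
      have : univ.filter (fun x : Fˣ => x ^ 1 = 1) = {1} := by
        ext x
        simp [pow_one]
      rw [this]
      simp
    · rw [if_neg hD1]
      exact sum_pow_eq_one_roots F D hDdvd (by omega)
  have hinv := (ArithmeticFunction.sum_eq_iff_sum_smul_moebius_eq_on
    (f := fun d : ℕ => ∑ x ∈ univ.filter (fun x : Fˣ => orderOf x = d), (x : F))
    (g := fun D : ℕ => if D = 1 then (1 : F) else 0)
    {m : ℕ | m ∣ N} (fun m n hmn hn => hmn.trans hn)).mp key N hN0 (dvd_refl N)
  rw [← hinv]
  rw [Finset.sum_eq_single_of_mem (⟨N, 1⟩ : ℕ × ℕ)]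
  · simp
  · rw [Nat.mem_divisorsAntidiagonal]
    constructor
    · omega
    · omega
  · rintro ⟨x, y⟩ hxy hne
    have hxy' := Nat.mem_divisorsAntidiagonal.mp hxy
    have hy1 : y ≠ 1 := by
      rintro rfl
      apply hne
      have : x = N := by omega
      rw [this]
    simp [hy1]

theorem exists_good_generator (F : Type*) [Field F] [Fintype F] [DecidableEq F]
    (h2 : (2 : F) = 0) (hchar : ringChar F = 2)
    (hsf : Squarefree (Fintype.card Fˣ)) (h3 : ¬ (3 ∣ Fintype.card Fˣ)) :
    ∃ v : Fˣ, orderOf v = Fintype.card Fˣ ∧ ∀ z : F, z ^ 2 + z ≠ (v : F) ^ 2 := by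
  by_contra hcon
  push_neg at hcon
  -- every primitive element is of the form y^2 + y
  have hall : ∀ x : Fˣ, orderOf x = Fintype.card Fˣ → ∃ y : F, y ^ 2 + y = (x : F) := by
    intro x hx
    obtain ⟨z, hz⟩ := hcon x hx
    obtain ⟨y, hy⟩ := FiniteField.isSquare_of_char_two hchar z
    refine ⟨y, ?_⟩
    have hsq : ((y ^ 2 + y) - (x : F)) ^ 2 = 0 := by
      linear_combination hz - (y^2 + z + 1) * hy
        + ((x:F)^2 + y^3 - y^2*(x:F) - y*(x:F)) * h2
    have hz0 := pow_eq_zero_iff (n := 2) (by omega) |>.mp hsq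
    linear_combination hz0
  -- hence the sum of primitive elements is of that form
  have hsum_form : ∃ y : F,
      y ^ 2 + y = ∑ x ∈ univ.filter (fun x : Fˣ => orderOf x = Fintype.card Fˣ), (x : F) := by
    apply Finset.sum_induction _ (fun w : F => ∃ y : F, y ^ 2 + y = w)
    · rintro a b ⟨ya, hya⟩ ⟨yb, hyb⟩
      exact ⟨ya + yb, by linear_combination hya + hyb + ya * yb * h2⟩
    · exact ⟨0, by ring⟩
    · intro x hx
      exact hall x (Finset.mem_filter.mp hx).2
  -- but that sum is μ(card) = ±1 = 1 in char 2
  have hmu : ((ArithmeticFunction.moebius (Fintype.card Fˣ) : ℤ) : F) = 1 := by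
    rcases ArithmeticFunction.moebius_ne_zero_iff_eq_or.mp
      (ArithmeticFunction.moebius_ne_zero_iff_squarefree.mpr hsf) with h | h
    · rw [h]; norm_num
    · rw [h]; push_cast; linear_combination -h2
  rw [sum_primitive F, hmu] at hsum_form
  obtain ⟨y, hy⟩ := hsum_form
  -- then y has order 3
  have hy1 : y ≠ 1 := by
    rintro rfl
    exact one_ne_zero (α := F) (by linear_combination hy)
  have hy0 : y ≠ 0 := by
    rintro rfl
    exact one_ne_zero (α := F) (by linear_combination -hy)
  have hy3 : y ^ 3 = 1 := by linear_combination (y - 1) * hy + (y - 1) * h2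
  have hdvd : orderOf y ∣ 3 := orderOf_dvd_of_pow_eq_one hy3
  have hne1 : orderOf y ≠ 1 := by
    intro h
    exact hy1 (orderOf_eq_one_iff.mp h)
  have hord3 : orderOf y = 3 := by
    rcases (Nat.dvd_prime Nat.prime_three).mp hdvd with h | h
    · exact absurd h hne1
    · exact h
  set u : Fˣ := Units.mk0 y hy0 with hu
  have huord : orderOf u = 3 := by
    rw [← hord3, ← orderOf_units]
    rfl
  exact h3 (huord ▸ orderOf_dvd_card)

end SumPrim

/-- for odd `n ≠ 1` with `2ⁿ − 1` squarefree, there is an irreducible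
λ-quiddity over the field with `2ⁿ` elements of size `3·(2ⁿ − 1)`; in particular the
maximal size of irreducible λ-quiddities over this field is at least `3·(2ⁿ − 1)`. -/
theorem stmt19 (n : ℕ) (hn : n ≠ 1) (hodd : Odd n) (hsf : Squarefree (2 ^ n - 1))
    (F : Type*) [Field F] [Fintype F] (hcard : Fintype.card F = 2 ^ n) :
    ∃ l : List F, IsQuiddity l ∧ ¬ QuiddityReducible l ∧
      l.length = 3 * (2 ^ n - 1) := by
  classical
  -- basic numerics
  obtain ⟨w, hw⟩ := hodd
  have hn3 : 3 ≤ n := by omega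
  have hqbig : 8 ≤ 2 ^ n := by
    calc (8 : ℕ) = 2 ^ 3 := by norm_num
    _ ≤ 2 ^ n := Nat.pow_le_pow_right (by omega) hn3
  -- characteristic 2
  haveI := ringChar.charP F
  obtain ⟨m', hprime, hcq⟩ := FiniteField.card F (ringChar F)
  have hchar : ringChar F = 2 := by
    have hdvd : ringChar F ∣ 2 ^ n := by
      rw [← hcard, hcq]
      exact dvd_pow_self _ (by positivity)
    have := Nat.Prime.dvd_of_dvd_pow hprime hdvd
    exact (Nat.prime_dvd_prime_iff_eq hprime Nat.prime_two).mp this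
  have h2 : (2 : F) = 0 := by
    have := CharP.cast_eq_zero F (ringChar F)
    rw [hchar] at this
    exact_mod_cast this
  have h01 : (0 : F) ≠ 1 := zero_ne_one
  -- unit group cardinality
  have hku : Fintype.card Fˣ = 2 ^ n - 1 := by
    rw [Fintype.card_units, hcard]
  -- 3 does not divide 2^n - 1
  have h4m : 4 ^ w % 3 = 1 := by
    rw [Nat.pow_mod]
    norm_num
  have h2n : 2 ^ n = 2 * 4 ^ w := by
    rw [hw, pow_succ, pow_mul]
    norm_num [Nat.mul_comm]
  have h3 : ¬ (3 ∣ Fintype.card Fˣ) := by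
    rw [hku]
    intro hdvd
    omega
  -- a good generator
  obtain ⟨u, huord, hAS⟩ := exists_good_generator F h2 hchar
    (by rwa [hku]) h3
  set vv : F := (u : F) with hvv
  set lam : F := ((u⁻¹ : Fˣ) : F) with hlam
  have hv : lam * vv = 1 := by
    rw [hlam, hvv, ← Units.val_mul, inv_mul_cancel, Units.val_one]
  obtain ⟨K, hKk⟩ : ∃ K : ℕ, 2 ^ n - 1 = K + 1 := ⟨2 ^ n - 2, by omega⟩
  have hK2 : 2 ≤ K := by omega
  have hcardK : Fintype.card Fˣ = K + 1 := by rw [hku, hKk]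
  have hvk : vv ^ (K + 1) = 1 := by
    rw [hvv, ← Units.val_pow_eq_pow_val, ← hcardK, pow_card_eq_one, Units.val_one]
  have hlk : lam ^ (K + 1) = 1 := by
    rw [hlam, ← Units.val_pow_eq_pow_val, ← hcardK, pow_card_eq_one, Units.val_one]
  have hord : ∀ m : ℕ, 0 < m → m < K + 1 → vv ^ m ≠ 1 := by
    intro m hm1 hm2 hcon
    have : u ^ m = 1 := by
      apply Units.val_eq_one.mp
      rw [Units.val_pow_eq_pow_val, ← hvv]
      exact hcon
    have hdv := orderOf_dvd_iff_pow_eq_one.mpr this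
    rw [huord, hcardK] at hdv
    have := Nat.le_of_dvd hm1 hdv
    omega
  have hAS' : ∀ z : F, z ^ 2 + z ≠ vv ^ 2 := by
    rw [hvv]; exact hAS
  -- the list
  refine ⟨triList (K + 1) lam vv, ?_, ?_, ?_⟩
  · exact Or.inl (mMat_quiddity h2 hv (K + 1) hvk hlk)
  · rintro ⟨a, b, ha, hb, hqb, heq⟩
    -- decompose b
    have hbne : b ≠ [] := by
      intro hbn
      rw [hbn] at hb
      simp at hb
    have htlne : b.tail ≠ [] := by
      intro htn
      have := congrArg List.length htn
      simp [List.length_tail] at this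
      omega
    have hb_eq : b = b.head hbne :: (b.tail.dropLast ++ [b.tail.getLast htlne]) := by
      rw [List.dropLast_append_getLast htlne, List.cons_head_tail]
    set t : List F := b.tail.dropLast with htdef
    have hqb' : IsQuiddity (b.head hbne :: (t ++ [b.tail.getLast htlne])) := by
      rw [htdef, ← hb_eq]
      exact hqb
    have hcont : mMat t 0 0 = 1 := interior_entry h2 _ _ t hqb'
    -- oplus decomposition
    set p : List F := (a.headD 0 + b.getLastD 0) :: (a.tail.dropLast ++ [a.getLastD 0 + b.headD 0])
      with hpdef
    have hop : oplus a b = p ++ t := by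
      rw [oplus, hpdef, htdef]
      simp [List.append_assoc]
    -- rotation
    have hrot : ∃ m, (triList (K + 1) lam vv).rotate m = oplus a b := by
      rcases heq with ⟨m, hm⟩ | hrev
      · exact ⟨m, hm⟩
      · obtain ⟨m, hm⟩ := hrev
        rw [reverse_eq_rotate_one, List.rotate_rotate] at hm
        exact ⟨1 + m, hm⟩
    obtain ⟨m, hm⟩ := hrot
    -- lengths
    have hlen_rot : (oplus a b).length = 3 * (K + 1) := by
      rw [← hm, List.length_rotate, triList_length]
    have hlen_p : p.length = a.length := by
      rw [hpdef]
      simp [List.length_dropLast, List.length_tail]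
      omega
    have hlen_t : t.length = b.length - 2 := by
      rw [htdef]
      simp [List.length_dropLast, List.length_tail]
      omega
    have hlen_op : (oplus a b).length = p.length + t.length := by
      rw [hop, List.length_append]
    have htne : t ≠ [] := by
      intro htn
      have := congrArg List.length htn
      rw [hlen_t] at this
      simp at this
      omega
    have hlen3 : t.length + 3 ≤ 3 * (K + 1) := by omega
    -- suffix of a rotation
    have hsuffix : t <:+ (triList (K + 1) lam vv).rotate (m % 3) := by
      rw [← triList_rotate_mod, hm, hop]
      exact ⟨p, rfl⟩
    have hm3 : m % 3 = 0 ∨ m % 3 = 1 ∨ m % 3 = 2 := by omega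
    refine master h2 hv h01 K hK2 hord hAS' t htne hlen3 ?_ hcont
    rcases hm3 with h | h | h
    · left
      rw [h, List.rotate_zero] at hsuffix
      exact hsuffix
    · right; left
      rwa [h] at hsuffix
    · right; right
      rwa [h] at hsuffix
  · rw [triList_length, hKk]
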